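/- arXiv:1803.05093 — 7 statements merged into one kernel-verified Lean document; each statement's English description precedes it below -/
import Mathlib

section
/- The spanning subgraph N of G whose edge set is the set of negative edges is a spanning forest of G: N contains no cycle, and two vertices of V are connected in N if and only if they are connected in G. -/
open SimpleGraph

/-- The function value of an edge: the larger of the values of its two endpoints. -/
noncomputable def fbar {V : Type*} (f : V → ℝ) : Sym2 V → ℝ :=
  Sym2.lift ⟨fun u w => max (f u) (f w), fun u w => max_comm (f u) (f w)⟩

/-- The spanning subgraph `G_{≺e}` of `G` whose edges are exactly the edges `e'` of `G`
with `e' ≺ e`. -/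
def Gbelow {V : Type*} (G : SimpleGraph V) (lt : Sym2 V → Sym2 V → Prop) (e : Sym2 V) :
    SimpleGraph V :=
  SimpleGraph.fromEdgeSet {e' | e' ∈ G.edgeSet ∧ lt e' e}

/-- An edge `e` of `G` is negative if its two endpoints lie in different connected
components of `G_{≺e}`. -/
def IsNegEdge {V : Type*} (G : SimpleGraph V) (lt : Sym2 V → Sym2 V → Prop) (e : Sym2 V) :
    Prop :=
  e ∈ G.edgeSet ∧ ∃ u w : V, e = s(u, w) ∧ ¬ (Gbelow G lt e).Reachable u w

/-- An edge `e` of `G` is positive if it is not negative. -/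
def IsPosEdge {V : Type*} (G : SimpleGraph V) (lt : Sym2 V → Sym2 V → Prop) (e : Sym2 V) :
    Prop :=
  e ∈ G.edgeSet ∧ ¬ IsNegEdge G lt e

/-- The `f`-minimizing vertex of the connected component of `u` in the graph `H`. -/
noncomputable def compMin {V : Type*} [Fintype V] (f : V → ℝ) (H : SimpleGraph V) (u : V) :
    V := by
  classical
  exact Classical.choose (Finset.exists_min_image
    (Finset.univ.filter fun v => H.Reachable u v) f
    ⟨u, Finset.mem_filter.mpr ⟨Finset.mem_univ u, SimpleGraph.Reachable.refl u⟩⟩)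

/-- The vertex `m(e)` paired with a negative edge `e` by the elder rule: of the two
`f`-minimizing vertices of the components (in `G_{≺e}`) of the endpoints of `e`, the one
with the larger `f`-value. -/
noncomputable def pairVert {V : Type*} [Fintype V] (G : SimpleGraph V) (f : V → ℝ)
    (hf : Function.Injective f) (lt : Sym2 V → Sym2 V → Prop) (e : Sym2 V) : V :=
  Sym2.lift ⟨fun u w =>
      if f (compMin f (Gbelow G lt e) u) < f (compMin f (Gbelow G lt e) w)
      then compMin f (Gbelow G lt e) w
      else compMin f (Gbelow G lt e) u, by
    intro u w
    dsimp only
    rcases lt_trichotomy (f (compMin f (Gbelow G lt e) u)) (f (compMin f (Gbelow G lt e) w))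
      with h | h | h
    · rw [if_pos h, if_neg (lt_asymm h)]
    · rw [hf h]
    · rw [if_neg (lt_asymm h), if_pos h]⟩ e

/-- The persistence of a negative edge `e`: `f̄(e) - f(m(e))`. -/
noncomputable def persE {V : Type*} [Fintype V] (G : SimpleGraph V) (f : V → ℝ)
    (hf : Function.Injective f) (lt : Sym2 V → Sym2 V → Prop) (e : Sym2 V) : ℝ :=
  fbar f e - f (pairVert G f hf lt e)


private lemma list_exists_max' {V : Type*} (G : SimpleGraph V)
    (lt : Sym2 V → Sym2 V → Prop)
    (htrans : ∀ e₁ ∈ G.edgeSet, ∀ e₂ ∈ G.edgeSet, ∀ e₃ ∈ G.edgeSet,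
      lt e₁ e₂ → lt e₂ e₃ → lt e₁ e₃)
    (htotal : ∀ e₁ ∈ G.edgeSet, ∀ e₂ ∈ G.edgeSet, e₁ ≠ e₂ → lt e₁ e₂ ∨ lt e₂ e₁) :
    ∀ (l : List (Sym2 V)), l ≠ [] → (∀ e ∈ l, e ∈ G.edgeSet) →
      ∃ e ∈ l, ∀ e' ∈ l, e' = e ∨ lt e' e := by
  intro l
  induction l with
  | nil => simp
  | cons a l ih =>
    intro _ hsub
    rcases eq_or_ne l [] with rfl | hl
    · refine ⟨a, by simp, ?_⟩
      intro e' he'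
      simp only [List.mem_singleton] at he'
      exact Or.inl he'
    · obtain ⟨e, hel, hmax⟩ := ih hl (fun e he => hsub e (List.mem_cons_of_mem _ he))
      have hae := hsub a List.mem_cons_self
      have heE := hsub e (List.mem_cons_of_mem _ hel)
      rcases eq_or_ne a e with rfl | hne
      · refine ⟨a, List.mem_cons_self, ?_⟩
        intro e' he'
        rcases List.mem_cons.mp he' with rfl | h
        · exact Or.inl rfl
        · exact hmax e' h
      rcases htotal a hae e heE hne with h | h
      · refine ⟨e, List.mem_cons_of_mem _ hel, ?_⟩
        intro e' he'
        rcases List.mem_cons.mp he' with rfl | h2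
        · exact Or.inr h
        · exact hmax e' h2
      · refine ⟨a, List.mem_cons_self, ?_⟩
        intro e' he'
        rcases List.mem_cons.mp he' with rfl | h2
        · exact Or.inl rfl
        · rcases hmax e' h2 with rfl | h3
          · exact Or.inr h
          · exact Or.inr (htrans e' (hsub e' (List.mem_cons_of_mem _ h2)) e heE a hae h3 h)

/-- The spanning subgraph `N` of `G` whose edge set is the set of negative
edges is a spanning forest of `G`: `N` contains no cycle, and two vertices are connected in
`N` iff they are connected in `G`. -/
theorem negative_edges_spanning_forest {V : Type*} [Fintype V]
    (G : SimpleGraph V) (f : V → ℝ) (hf : Function.Injective f)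
    (lt : Sym2 V → Sym2 V → Prop)
    (hlt_irrefl : ∀ e ∈ G.edgeSet, ¬ lt e e)
    (hlt_trans : ∀ e₁ ∈ G.edgeSet, ∀ e₂ ∈ G.edgeSet, ∀ e₃ ∈ G.edgeSet,
      lt e₁ e₂ → lt e₂ e₃ → lt e₁ e₃)
    (hlt_total : ∀ e₁ ∈ G.edgeSet, ∀ e₂ ∈ G.edgeSet, e₁ ≠ e₂ → lt e₁ e₂ ∨ lt e₂ e₁)
    (hlt_refine : ∀ e₁ ∈ G.edgeSet, ∀ e₂ ∈ G.edgeSet, fbar f e₁ < fbar f e₂ → lt e₁ e₂) :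
    (SimpleGraph.fromEdgeSet {e | IsNegEdge G lt e}).IsAcyclic ∧
    ∀ u w : V,
      (SimpleGraph.fromEdgeSet {e | IsNegEdge G lt e}).Reachable u w ↔ G.Reachable u w := by
  classical
  set N := SimpleGraph.fromEdgeSet {e | IsNegEdge G lt e} with hN
  have hNle : N ≤ G := by
    intro a b hab
    rw [hN, SimpleGraph.fromEdgeSet_adj] at hab
    exact G.mem_edgeSet.mp hab.1.1
  have key : ∀ n : ℕ, ∀ e ∈ G.edgeSet,
      ({e' | e' ∈ G.edgeSet ∧ lt e' e}).ncard ≤ n →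
      ∀ u w : V, e = s(u, w) → N.Reachable u w := by
    intro n
    induction n using Nat.strong_induction_on with
    | _ n IH =>
      intro e he hcard u w huw
      by_cases hneg : IsNegEdge G lt e
      · have hadj : G.Adj u w := G.mem_edgeSet.mp (huw ▸ he)
        have : N.Adj u w := by
          rw [hN, SimpleGraph.fromEdgeSet_adj]
          exact ⟨huw ▸ hneg, hadj.ne⟩
        exact this.reachable
      · have hr : (Gbelow G lt e).Reachable u w := by
          by_contra hcon
          exact hneg ⟨he, u, w, huw, hcon⟩
        have hstep : ∀ a b : V, (Gbelow G lt e).Adj a b → N.Reachable a b := by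
          intro a b hab
          rw [Gbelow, SimpleGraph.fromEdgeSet_adj] at hab
          obtain ⟨⟨hmem, hlt⟩, hne⟩ := hab
          have hsub : {e' | e' ∈ G.edgeSet ∧ lt e' s(a, b)} ⊂ {e' | e' ∈ G.edgeSet ∧ lt e' e} := by
            constructor
            · intro x hx
              exact ⟨hx.1, hlt_trans x hx.1 s(a,b) hmem e he hx.2 hlt⟩
            · intro hss
              have : s(a, b) ∈ {e' | e' ∈ G.edgeSet ∧ lt e' s(a, b)} :=
                hss ⟨hmem, hlt⟩
              exact hlt_irrefl s(a,b) hmem this.2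
          have hlt' : ({e' | e' ∈ G.edgeSet ∧ lt e' s(a, b)}).ncard
              < ({e' | e' ∈ G.edgeSet ∧ lt e' e}).ncard :=
            Set.ncard_lt_ncard hsub (Set.toFinite _)
          have hm : ({e' | e' ∈ G.edgeSet ∧ lt e' s(a, b)}).ncard < n :=
            lt_of_lt_of_le hlt' hcard
          exact IH _ hm s(a,b) hmem le_rfl a b rfl
        have chain : ∀ {a b : V}, (Gbelow G lt e).Walk a b → N.Reachable a b := by
          intro a b p
          induction p with
          | nil => exact SimpleGraph.Reachable.refl _
          | cons h p ih => exact (hstep _ _ h).trans ih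
        exact hr.elim fun p => chain p
  have hedge : ∀ u w : V, G.Adj u w → N.Reachable u w := by
    intro u w h
    exact key _ s(u,w) h le_rfl u w rfl
  constructor
  · intro v c hc
    have hlen : c.edges ≠ [] := by
      have h3 := hc.three_le_length
      have hl := c.length_edges
      intro hnil
      rw [hnil] at hl
      simp at hl
      omega
    have hcsub : ∀ e' ∈ c.edges, IsNegEdge G lt e' := by
      intro e' he'
      have := c.edges_subset_edgeSet he'
      rw [hN, SimpleGraph.edgeSet_fromEdgeSet] at this
      exact this.1
    have hcG : ∀ e' ∈ c.edges, e' ∈ G.edgeSet := fun e' he' => (hcsub e' he').1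
    obtain ⟨e, hel, hmax⟩ := list_exists_max' G lt hlt_trans hlt_total c.edges hlen hcG
    obtain ⟨heG, u, w, hew, hnr⟩ := hcsub e hel
    set M := SimpleGraph.fromEdgeSet {e' | e' ∈ c.edges} with hM
    have htr : ∀ e' ∈ c.edges, e' ∈ M.edgeSet := by
      intro e' he'
      rw [hM, SimpleGraph.edgeSet_fromEdgeSet]
      exact ⟨he', SimpleGraph.not_isDiag_of_mem_edgeSet G (hcG e' he')⟩
    have hc' : (c.transfer M htr).IsCycle := hc.transfer htr
    have hmemM : s(u, w) ∈ (c.transfer M htr).edges := by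
      rw [SimpleGraph.Walk.edges_transfer]
      exact hew ▸ hel
    have hreach : (M \ SimpleGraph.fromEdgeSet {s(u, w)}).Reachable u w :=
      (SimpleGraph.adj_and_reachable_delete_edges_iff_exists_cycle.mpr
        ⟨v, c.transfer M htr, hc', hmemM⟩).2
    have hle : (M \ SimpleGraph.fromEdgeSet {s(u, w)}) ≤ Gbelow G lt e := by
      intro a b hab
      rw [SimpleGraph.sdiff_adj] at hab
      obtain ⟨hM1, hM2⟩ := hab
      rw [hM, SimpleGraph.fromEdgeSet_adj] at hM1
      obtain ⟨hmemc, hne⟩ := hM1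
      have hneq : s(a, b) ≠ e := by
        intro hcontra
        apply hM2
        rw [SimpleGraph.fromEdgeSet_adj]
        exact ⟨by rw [hcontra, hew]; rfl, hne⟩
      have h := (hmax s(a,b) hmemc).resolve_left hneq
      rw [Gbelow, SimpleGraph.fromEdgeSet_adj]
      exact ⟨⟨hcG s(a,b) hmemc, h⟩, hne⟩
    exact hnr (hreach.mono hle)
  · intro u w
    constructor
    · exact fun h => h.mono hNle
    · intro h
      have chain : ∀ {a b : V}, G.Walk a b → N.Reachable a b := by
        intro a b p
        induction p with
        | nil => exact SimpleGraph.Reachable.refl _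
        | cons h p ih => exact (hedge _ _ h).trans ih
      exact h.elim fun p => chain p
end

section
/- The elder-rule assignment e ↦ m(e), sending each negative edge to its paired vertex, is a bijection from the set of negative edges of G onto the set of vertices v ∈ V that are not the f-minimizing vertex of their connected component in G. -/
open SimpleGraph

/-! ### Auxiliary lemmas -/

lemma compMin_spec {V : Type*} [Fintype V] (f : V → ℝ) (H : SimpleGraph V) (u : V) :
    H.Reachable u (compMin f H u) ∧ ∀ v, H.Reachable u v → f (compMin f H u) ≤ f v := by
  classical
  have h := Classical.choose_spec (Finset.exists_min_image
    (Finset.univ.filter fun v => H.Reachable u v) f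
    ⟨u, Finset.mem_filter.mpr ⟨Finset.mem_univ u, SimpleGraph.Reachable.refl u⟩⟩)
  refine ⟨(Finset.mem_filter.mp h.1).2, fun v hv => h.2 v ?_⟩
  exact Finset.mem_filter.mpr ⟨Finset.mem_univ v, hv⟩

lemma reach_compMin {V : Type*} [Fintype V] (f : V → ℝ) (H : SimpleGraph V) (u : V) :
    H.Reachable u (compMin f H u) := (compMin_spec f H u).1

lemma compMin_le {V : Type*} [Fintype V] (f : V → ℝ) (H : SimpleGraph V) {u v : V}
    (h : H.Reachable u v) : f (compMin f H u) ≤ f v := (compMin_spec f H u).2 v h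

lemma compMin_congr {V : Type*} [Fintype V] {f : V → ℝ} (hf : Function.Injective f)
    (H : SimpleGraph V) {u w : V} (h : H.Reachable u w) : compMin f H u = compMin f H w := by
  apply hf
  exact le_antisymm (compMin_le f H (h.trans (reach_compMin f H w)))
    (compMin_le f H (h.symm.trans (reach_compMin f H u)))

lemma compMin_eq_self {V : Type*} [Fintype V] {f : V → ℝ} (hf : Function.Injective f)
    (H : SimpleGraph V) {u : V} (h : ∀ v, H.Reachable u v → f u ≤ f v) :
    compMin f H u = u :=
  hf (le_antisymm (compMin_le f H (SimpleGraph.Reachable.refl u)) (h _ (reach_compMin f H u)))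

lemma Gbelow_le {V : Type*} (G : SimpleGraph V) (lt : Sym2 V → Sym2 V → Prop) (e : Sym2 V) :
    Gbelow G lt e ≤ G := by
  intro u w h
  rw [Gbelow, SimpleGraph.fromEdgeSet_adj] at h
  exact G.mem_edgeSet.mp h.1.1

lemma pairVert_mk {V : Type*} [Fintype V] (G : SimpleGraph V) (f : V → ℝ)
    (hf : Function.Injective f) (lt : Sym2 V → Sym2 V → Prop) (a b : V) :
    pairVert G f hf lt s(a, b) =
      if f (compMin f (Gbelow G lt s(a, b)) a) < f (compMin f (Gbelow G lt s(a, b)) b)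
      then compMin f (Gbelow G lt s(a, b)) b
      else compMin f (Gbelow G lt s(a, b)) a := rfl

lemma exists_rel_minimal {α : Type*} [Finite α] (lt : α → α → Prop) (E : Set α)
    (hirr : ∀ e ∈ E, ¬ lt e e)
    (htr : ∀ e₁ ∈ E, ∀ e₂ ∈ E, ∀ e₃ ∈ E, lt e₁ e₂ → lt e₂ e₃ → lt e₁ e₃)
    {s : Set α} (hsub : s ⊆ E) (hne : s.Nonempty) :
    ∃ m ∈ s, ∀ x ∈ s, ¬ lt x m := by
  classical
  let r : E → E → Prop := fun a b => lt a.1 b.1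
  haveI : IsTrans E r := ⟨fun a b c => htr _ a.2 _ b.2 _ c.2⟩
  haveI : IsIrrefl E r := ⟨fun a => hirr _ a.2⟩
  have wf : WellFounded r := Finite.wellFounded_of_trans_of_irrefl r
  obtain ⟨x, hx⟩ := hne
  have hne' : {a : E | a.1 ∈ s}.Nonempty := ⟨⟨x, hsub hx⟩, hx⟩
  obtain ⟨m, hm, hmin⟩ := wf.has_min _ hne'
  exact ⟨m.1, hm, fun y hy hlt => hmin ⟨y, hsub hy⟩ hy hlt⟩

lemma reach_of_add_edge {V : Type*} {H H' : SimpleGraph V} {a b x y : V}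
    (hE : ∀ p q, H'.Adj p q → H.Adj p q ∨ s(p, q) = s(a, b))
    (h : H'.Reachable x y) :
    H.Reachable x y ∨ (H.Reachable x a ∧ H.Reachable b y) ∨
      (H.Reachable x b ∧ H.Reachable a y) := by
  obtain ⟨p⟩ := h
  induction p with
  | nil => exact Or.inl (SimpleGraph.Reachable.refl _)
  | @cons x z y hxz p ih =>
    rcases hE _ _ hxz with hadj | heq
    · have r : H.Reachable x z := hadj.reachable
      rcases ih with h1 | ⟨h1, h2⟩ | ⟨h1, h2⟩
      · exact Or.inl (r.trans h1)
      · exact Or.inr (Or.inl ⟨r.trans h1, h2⟩)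
      · exact Or.inr (Or.inr ⟨r.trans h1, h2⟩)
    · rw [Sym2.eq_iff] at heq
      rcases heq with ⟨rfl, rfl⟩ | ⟨rfl, rfl⟩
      · rcases ih with h1 | ⟨h1, h2⟩ | ⟨h1, h2⟩
        · exact Or.inr (Or.inl ⟨SimpleGraph.Reachable.refl _, h1⟩)
        · exact Or.inl (h1.symm.trans h2)
        · exact Or.inl h2
      · rcases ih with h1 | ⟨h1, h2⟩ | ⟨h1, h2⟩
        · exact Or.inr (Or.inr ⟨SimpleGraph.Reachable.refl _, h1⟩)
        · exact Or.inl h2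
        · exact Or.inl (h1.symm.trans h2)

/-- The graph of edges `≼ e`. -/
def Gupto {V : Type*} (G : SimpleGraph V) (lt : Sym2 V → Sym2 V → Prop) (e : Sym2 V) :
    SimpleGraph V :=
  SimpleGraph.fromEdgeSet {e' | e' ∈ G.edgeSet ∧ (lt e' e ∨ e' = e)}

lemma Gbelow_mono {V : Type*} (G : SimpleGraph V) (lt : Sym2 V → Sym2 V → Prop)
    (hlt_trans : ∀ e₁ ∈ G.edgeSet, ∀ e₂ ∈ G.edgeSet, ∀ e₃ ∈ G.edgeSet,
      lt e₁ e₂ → lt e₂ e₃ → lt e₁ e₃)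
    {e₁ e₂ : Sym2 V} (h1 : e₁ ∈ G.edgeSet) (h2 : e₂ ∈ G.edgeSet) (h : lt e₁ e₂) :
    Gbelow G lt e₁ ≤ Gbelow G lt e₂ := by
  intro u w hadj
  rw [Gbelow, SimpleGraph.fromEdgeSet_adj] at hadj ⊢
  exact ⟨⟨hadj.1.1, hlt_trans _ hadj.1.1 _ h1 _ h2 hadj.1.2 h⟩, hadj.2⟩

/-- Given a walk with edges in `G`, there is a maximal edge `em` on the walk such that
the walk lives in `Gupto em`. -/
lemma walk_max_edge {V : Type*} [Fintype V] (G : SimpleGraph V)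
    (lt : Sym2 V → Sym2 V → Prop)
    (hlt_irrefl : ∀ e ∈ G.edgeSet, ¬ lt e e)
    (hlt_trans : ∀ e₁ ∈ G.edgeSet, ∀ e₂ ∈ G.edgeSet, ∀ e₃ ∈ G.edgeSet,
      lt e₁ e₂ → lt e₂ e₃ → lt e₁ e₃)
    (hlt_total : ∀ e₁ ∈ G.edgeSet, ∀ e₂ ∈ G.edgeSet, e₁ ≠ e₂ → lt e₁ e₂ ∨ lt e₂ e₁)
    {K : SimpleGraph V} {v y : V} (p : K.Walk v y)
    (hK : ∀ e ∈ p.edges, e ∈ G.edgeSet) (hne : v ≠ y) :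
    ∃ em ∈ p.edges, em ∈ G.edgeSet ∧ (Gupto G lt em).Reachable v y := by
  have hnil : p.edges ≠ [] := by
    cases p with
    | nil => exact absurd rfl hne
    | cons h q => simp
  have hsne : {e | e ∈ p.edges}.Nonempty := by
    obtain ⟨x, hx⟩ := List.exists_mem_of_ne_nil _ hnil
    exact ⟨x, hx⟩
  obtain ⟨em, hem, hmax⟩ := exists_rel_minimal (fun a b => lt b a) G.edgeSet
    (fun e he h => hlt_irrefl e he h)
    (fun e₁ h1 e₂ h2 e₃ h3 ha hb => hlt_trans _ h3 _ h2 _ h1 hb ha)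
    (fun x (hx : x ∈ p.edges) => hK x hx) hsne
  refine ⟨em, hem, hK em hem, ?_⟩
  have htr : ∀ e' ∈ p.edges, e' ∈ (Gupto G lt em).edgeSet := by
    intro e' he'
    rw [Gupto, SimpleGraph.edgeSet_fromEdgeSet]
    refine ⟨⟨hK e' he', ?_⟩, SimpleGraph.not_isDiag_of_mem_edgeSet G (hK e' he')⟩
    by_cases h : e' = em
    · exact Or.inr h
    · rcases hlt_total e' (hK e' he') em (hK em hem) h with h' | h'
      · exact Or.inl h'
      · exact absurd h' (hmax e' he')
  exact ⟨p.transfer _ htr⟩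

lemma elder_inj_aux {V : Type*} [Fintype V]
    (G : SimpleGraph V) (f : V → ℝ) (hf : Function.Injective f)
    (lt : Sym2 V → Sym2 V → Prop)
    (hlt_trans : ∀ e₁ ∈ G.edgeSet, ∀ e₂ ∈ G.edgeSet, ∀ e₃ ∈ G.edgeSet,
      lt e₁ e₂ → lt e₂ e₃ → lt e₁ e₃)
    {e₁ e₂ : Sym2 V} (h1 : IsNegEdge G lt e₁) (h2 : IsNegEdge G lt e₂)
    (hlt : lt e₁ e₂) (heq : pairVert G f hf lt e₁ = pairVert G f hf lt e₂) : False := by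
  obtain ⟨he1, a, b, rfl, hnr1⟩ := h1
  obtain ⟨he2, c, d, rfl, hnr2⟩ := h2
  set H1 := Gbelow G lt s(a, b) with hH1
  set H2 := Gbelow G lt s(c, d) with hH2
  have hmono : H1 ≤ H2 := Gbelow_mono G lt hlt_trans he1 he2 hlt
  have hadj1 : G.Adj a b := G.mem_edgeSet.mp he1
  have hadj2 : H2.Adj a b := by
    rw [hH2, Gbelow, SimpleGraph.fromEdgeSet_adj]
    exact ⟨⟨he1, hlt⟩, hadj1.ne⟩
  -- the paired vertex of e₂ is the minimum of its component in H2
  have hx : ∃ x, pairVert G f hf lt s(c, d) = compMin f H2 x := by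
    rw [pairVert_mk]
    by_cases hc : f (compMin f (Gbelow G lt s(c, d)) c) <
        f (compMin f (Gbelow G lt s(c, d)) d)
    · exact ⟨d, by rw [if_pos hc]⟩
    · exact ⟨c, by rw [if_neg hc]⟩
  obtain ⟨x, hx⟩ := hx
  have hm_min : ∀ y, H2.Reachable (pairVert G f hf lt s(c, d)) y →
      f (pairVert G f hf lt s(c, d)) ≤ f y := by
    intro y hy
    have h1 : compMin f H2 (pairVert G f hf lt s(c, d)) = pairVert G f hf lt s(c, d) := by
      rw [hx, ← compMin_congr hf H2 (reach_compMin f H2 x)]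
    calc f (pairVert G f hf lt s(c, d))
        = f (compMin f H2 (pairVert G f hf lt s(c, d))) := by rw [h1]
      _ ≤ f y := compMin_le f H2 hy
  -- but the paired vertex of e₁ is one of the two component minima of e₁
  set ma := compMin f H1 a with hma
  set mb := compMin f H1 b with hmb
  have hra : H2.Reachable a ma := (reach_compMin f H1 a).mono hmono
  have hrb : H2.Reachable b mb := (reach_compMin f H1 b).mono hmono
  have hne : ma ≠ mb := by
    intro h
    apply hnr1
    have h2 : H1.Reachable b ma := by rw [h]; exact reach_compMin f H1 b
    exact (reach_compMin f H1 a).trans h2.symm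
  have hfne : f ma ≠ f mb := fun h => hne (hf h)
  rw [pairVert_mk] at heq
  by_cases hc : f ma < f mb
  · rw [if_pos hc] at heq
    -- pairVert e₂ = mb, but ma is in its component with smaller value
    have hr : H2.Reachable (pairVert G f hf lt s(c, d)) ma := by
      rw [← heq]
      exact hrb.symm.trans (hadj2.symm.reachable.trans hra)
    have := hm_min ma hr
    rw [← heq] at this
    exact absurd this (not_le.mpr hc)
  · rw [if_neg hc] at heq
    have hc' : f mb < f ma := lt_of_le_of_ne (not_lt.mp hc) hfne.symm
    have hr : H2.Reachable (pairVert G f hf lt s(c, d)) mb := by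
      rw [← heq]
      exact hra.symm.trans (hadj2.reachable.trans hrb)
    have := hm_min mb hr
    rw [← heq] at this
    exact absurd this (not_le.mpr hc')

/-- The elder-rule assignment `e ↦ m(e)` is a bijection from the set of
negative edges of `G` onto the set of vertices that are not the `f`-minimizing vertex of
their connected component in `G`. -/
theorem elder_rule_bijection {V : Type*} [Fintype V]
    (G : SimpleGraph V) (f : V → ℝ) (hf : Function.Injective f)
    (lt : Sym2 V → Sym2 V → Prop)
    (hlt_irrefl : ∀ e ∈ G.edgeSet, ¬ lt e e)
    (hlt_trans : ∀ e₁ ∈ G.edgeSet, ∀ e₂ ∈ G.edgeSet, ∀ e₃ ∈ G.edgeSet,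
      lt e₁ e₂ → lt e₂ e₃ → lt e₁ e₃)
    (hlt_total : ∀ e₁ ∈ G.edgeSet, ∀ e₂ ∈ G.edgeSet, e₁ ≠ e₂ → lt e₁ e₂ ∨ lt e₂ e₁)
    (hlt_refine : ∀ e₁ ∈ G.edgeSet, ∀ e₂ ∈ G.edgeSet, fbar f e₁ < fbar f e₂ → lt e₁ e₂) :
    Set.BijOn (pairVert G f hf lt) {e | IsNegEdge G lt e}
      {v : V | ∃ u : V, G.Reachable v u ∧ f u < f v} := by
  classical
  refine ⟨?_, ?_, ?_⟩
  · -- MapsTo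
    rintro e ⟨heG, u, w, rfl, hnr⟩
    set H := Gbelow G lt s(u, w) with hH
    set mu := compMin f H u with hmu
    set mw := compMin f H w with hmw
    have hadj : G.Adj u w := G.mem_edgeSet.mp heG
    have hne : mu ≠ mw := by
      intro h
      apply hnr
      have h2 : H.Reachable w mu := by rw [h]; exact reach_compMin f H w
      exact (reach_compMin f H u).trans h2.symm
    have hfne : f mu ≠ f mw := fun h => hne (hf h)
    have h1 : G.Reachable u mu := (reach_compMin f H u).mono (Gbelow_le G lt _)
    have h2 : G.Reachable w mw := (reach_compMin f H w).mono (Gbelow_le G lt _)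
    show ∃ x, G.Reachable (pairVert G f hf lt s(u, w)) x ∧ f x < f (pairVert G f hf lt s(u, w))
    rw [pairVert_mk]
    by_cases hc : f mu < f mw
    · rw [if_pos hc]
      exact ⟨mu, h2.symm.trans (hadj.symm.reachable.trans h1), hc⟩
    · rw [if_neg hc]
      exact ⟨mw, h1.symm.trans (hadj.reachable.trans h2),
        lt_of_le_of_ne (not_lt.mp hc) hfne.symm⟩
  · -- InjOn
    intro e₁ h1 e₂ h2 heq
    by_contra hne
    rcases hlt_total e₁ h1.1 e₂ h2.1 hne with h | h
    · exact elder_inj_aux G f hf lt hlt_trans h1 h2 h heq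
    · exact elder_inj_aux G f hf lt hlt_trans h2 h1 h heq.symm
  · -- SurjOn
    rintro v ⟨u, hvu, hfu⟩
    -- the set of edges e such that v can reach something smaller in Gupto e
    set S : Set (Sym2 V) :=
      {e | e ∈ G.edgeSet ∧ ∃ y, (Gupto G lt e).Reachable v y ∧ f y < f v} with hS
    have hS_ne : S.Nonempty := by
      obtain ⟨p⟩ := hvu
      have hne : v ≠ u := fun h => absurd hfu (by rw [h]; exact lt_irrefl _)
      obtain ⟨em, _, hmG, hreach⟩ := walk_max_edge G lt hlt_irrefl hlt_trans hlt_total p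
        (fun e he => p.edges_subset_edgeSet he) hne
      exact ⟨em, hmG, u, hreach, hfu⟩
    obtain ⟨e, heS, hmin⟩ := exists_rel_minimal lt G.edgeSet hlt_irrefl hlt_trans
      (fun x hx => hx.1) hS_ne
    obtain ⟨heG, y0, hy0r, hy0⟩ := heS
    -- v is minimal in its component of Gbelow e
    have hA : ∀ z, (Gbelow G lt e).Reachable v z → f v ≤ f z := by
      intro z hz
      by_contra hlt'
      push_neg at hlt'
      obtain ⟨p⟩ := hz
      have hvz : v ≠ z := fun h => absurd hlt' (by rw [h]; exact lt_irrefl _)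
      have hK : ∀ e' ∈ p.edges, e' ∈ G.edgeSet := by
        intro e' he'
        have := p.edges_subset_edgeSet he'
        rw [Gbelow, SimpleGraph.edgeSet_fromEdgeSet] at this
        exact this.1.1
      obtain ⟨em, hmem, hmG, hreach⟩ :=
        walk_max_edge G lt hlt_irrefl hlt_trans hlt_total p hK hvz
      have hltm : lt em e := by
        have := p.edges_subset_edgeSet hmem
        rw [Gbelow, SimpleGraph.edgeSet_fromEdgeSet] at this
        exact this.1.2
      exact hmin em ⟨hmG, z, hreach, hlt'⟩ hltm
    obtain ⟨a, b, rfl⟩ : ∃ a b, e = s(a, b) :=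
      Sym2.ind (fun a b => ⟨a, b, rfl⟩) e
    set H := Gbelow G lt s(a, b) with hH
    have hadj : G.Adj a b := G.mem_edgeSet.mp heG
    have hdecomp : ∀ p q, (Gupto G lt s(a, b)).Adj p q → H.Adj p q ∨ s(p, q) = s(a, b) := by
      intro p q h
      rw [Gupto, SimpleGraph.fromEdgeSet_adj] at h
      rcases h.1.2 with h' | h'
      · exact Or.inl ((SimpleGraph.fromEdgeSet_adj _).mpr ⟨⟨h.1.1, h'⟩, h.2⟩)
      · exact Or.inr h'
    have hcase := reach_of_add_edge hdecomp hy0r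
    have hnr : ¬ H.Reachable a b := by
      intro hr
      rcases hcase with h1 | ⟨h1, h2⟩ | ⟨h1, h2⟩
      · exact absurd (hA y0 h1) (not_le.mpr hy0)
      · exact absurd (hA y0 (h1.trans (hr.trans h2))) (not_le.mpr hy0)
      · exact absurd (hA y0 (h1.trans (hr.symm.trans h2))) (not_le.mpr hy0)
    have hNeg : IsNegEdge G lt s(a, b) := ⟨heG, a, b, rfl, hnr⟩
    have hvmin : compMin f H v = v := compMin_eq_self hf H hA
    refine ⟨s(a, b), hNeg, ?_⟩
    rw [pairVert_mk]
    rcases hcase with h1 | ⟨h1, h2⟩ | ⟨h1, h2⟩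
    · exact absurd (hA y0 h1) (not_le.mpr hy0)
    · have hma : compMin f H a = v := (compMin_congr hf H h1).symm.trans hvmin
      have hmb : f (compMin f H b) < f v := lt_of_le_of_lt (compMin_le f H h2) hy0
      rw [if_neg (by rw [hma]; exact not_lt.mpr hmb.le), hma]
    · have hmb : compMin f H b = v := (compMin_congr hf H h1).symm.trans hvmin
      have hma : f (compMin f H a) < f v := lt_of_le_of_lt (compMin_le f H h2) hy0
      rw [if_pos (by rw [hmb]; exact hma), hmb]
end

section
/- Under the noise model, every negative edge e of G satisfies pers(e) ≤ ν; equivalently, every paired vertex of G has persistence at most ν. In particular, for any δ with ν ≤ δ, every vertex–edge persistence pair has persistence at most δ. -/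
open SimpleGraph

/-- Under the noise model, every negative edge has persistence at most `ν`;
in particular, for any `δ ≥ ν`, every vertex–edge persistence pair has persistence at most
`δ`. -/
theorem negative_edge_persistence_le_nu {V : Type*} [Fintype V]
    (G : SimpleGraph V) (f : V → ℝ) (hf : Function.Injective f)
    (lt : Sym2 V → Sym2 V → Prop)
    (hlt_irrefl : ∀ e ∈ G.edgeSet, ¬ lt e e)
    (hlt_trans : ∀ e₁ ∈ G.edgeSet, ∀ e₂ ∈ G.edgeSet, ∀ e₃ ∈ G.edgeSet,
      lt e₁ e₂ → lt e₂ e₃ → lt e₁ e₃)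
    (hlt_total : ∀ e₁ ∈ G.edgeSet, ∀ e₂ ∈ G.edgeSet, e₁ ≠ e₂ → lt e₁ e₂ ∨ lt e₂ e₁)
    (hlt_refine : ∀ e₁ ∈ G.edgeSet, ∀ e₂ ∈ G.edgeSet, fbar f e₁ < fbar f e₂ → lt e₁ e₂)
    (S : Set V) (β ν : ℝ) (hβν : 2 * ν < β) (hν : 0 ≤ ν)
    (hG : G.Connected) (hS : (G.induce S).Connected)
    (hfS : ∀ v ∈ S, f v ∈ Set.Icc (-β - ν) (-β))
    (hfSc : ∀ v : V, v ∉ S → f v ∈ Set.Icc (-ν) 0) :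
    (∀ e : Sym2 V, IsNegEdge G lt e → persE G f hf lt e ≤ ν) ∧
    (∀ δ : ℝ, ν ≤ δ → ∀ e : Sym2 V, IsNegEdge G lt e → persE G f hf lt e ≤ δ) := by
  classical
  have key : ∀ e : Sym2 V, IsNegEdge G lt e → persE G f hf lt e ≤ ν := by
    intro e he
    obtain ⟨heG, u, w, rfl, hur⟩ := he
    set H := Gbelow G lt s(u, w) with hH
    set mu := compMin f H u with hmu_def
    set mw := compMin f H w with hmw_def
    have hmu := compMin_spec f H u
    have hmw := compMin_spec f H w
    have hpv : f (pairVert G f hf lt s(u, w)) = max (f mu) (f mw) := by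
      show f (if f (compMin f (Gbelow G lt s(u,w)) u) < f (compMin f (Gbelow G lt s(u,w)) w)
        then compMin f (Gbelow G lt s(u,w)) w else compMin f (Gbelow G lt s(u,w)) u) = _
      rw [← hH, ← hmu_def, ← hmw_def]
      split_ifs with h
      · exact (max_eq_right h.le).symm
      · exact (max_eq_left (not_lt.mp h)).symm
    have hlow : ∀ v : V, -β - ν ≤ f v := fun v => by
      by_cases hv : v ∈ S
      · exact (hfS v hv).1
      · have := (hfSc v hv).1; linarith
    have hup : ∀ v : V, f v ≤ 0 := fun v => by
      by_cases hv : v ∈ S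
      · have := (hfS v hv).2; linarith
      · exact (hfSc v hv).2
    have hfbar : fbar f s(u, w) = max (f u) (f w) := rfl
    rw [persE, hpv]
    by_cases hcase : fbar f s(u, w) ≤ -β
    · have h1 := hlow mu
      have h2 := le_max_left (f mu) (f mw)
      linarith
    · push_neg at hcase
      have hedge : ∀ a b : S, G.Adj a.1 b.1 → H.Adj a.1 b.1 := by
        intro a b hab
        have hmem : s(a.1, b.1) ∈ G.edgeSet := hab
        have ha2 := (hfS a.1 a.2).2
        have hb2 := (hfS b.1 b.2).2
        have hfb : fbar f s(a.1, b.1) < fbar f s(u, w) := by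
          calc fbar f s(a.1, b.1) = max (f a.1) (f b.1) := rfl
            _ ≤ -β := max_le ha2 hb2
            _ < fbar f s(u, w) := hcase
        have hlt := hlt_refine _ hmem _ heG hfb
        rw [hH, Gbelow, SimpleGraph.fromEdgeSet_adj]
        exact ⟨⟨hmem, hlt⟩, hab.ne⟩
      have hSreach : ∀ a ∈ S, ∀ b ∈ S, H.Reachable a b := by
        intro a haS b hbS
        have hr : (G.induce S).Reachable ⟨a, haS⟩ ⟨b, hbS⟩ := hS.preconnected _ _
        exact hr.map ⟨Subtype.val, fun hadj => hedge _ _ hadj⟩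
      have hside : (∀ v, H.Reachable u v → v ∉ S) ∨ (∀ v, H.Reachable w v → v ∉ S) := by
        by_contra hc
        push_neg at hc
        obtain ⟨⟨a, hua, haS⟩, ⟨b, hwb, hbS⟩⟩ := hc
        exact hur (hua.trans ((hSreach a haS b hbS).trans hwb.symm))
      have hν' : -ν ≤ max (f mu) (f mw) := by
        rcases hside with h | h
        · exact le_trans (hfSc mu (h mu hmu.1)).1 (le_max_left _ _)
        · exact le_trans (hfSc mw (h mw hmw.1)).1 (le_max_right _ _)
      have hfb0 : fbar f s(u, w) ≤ 0 := by
        rw [hfbar]; exact max_le (hup u) (hup w)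
      linarith
  exact ⟨key, fun δ hδ e he => (key e he).trans hδ⟩
end

section
/- Under the noise model, no vertex–edge persistence pair crosses S: there is no negative edge e having an endpoint outside S whose paired vertex m(e) lies in S, and there is no negative edge e with both endpoints in S whose paired vertex m(e) lies outside S. -/
open SimpleGraph

/-- Under the noise model, no vertex–edge persistence pair crosses `S`:
no negative edge with an endpoint outside `S` has its paired vertex in `S`, and no negative
edge with both endpoints in `S` has its paired vertex outside `S`. -/
theorem no_crossing_pairs {V : Type*} [Fintype V]
    (G : SimpleGraph V) (f : V → ℝ) (hf : Function.Injective f)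
    (lt : Sym2 V → Sym2 V → Prop)
    (hlt_irrefl : ∀ e ∈ G.edgeSet, ¬ lt e e)
    (hlt_trans : ∀ e₁ ∈ G.edgeSet, ∀ e₂ ∈ G.edgeSet, ∀ e₃ ∈ G.edgeSet,
      lt e₁ e₂ → lt e₂ e₃ → lt e₁ e₃)
    (hlt_total : ∀ e₁ ∈ G.edgeSet, ∀ e₂ ∈ G.edgeSet, e₁ ≠ e₂ → lt e₁ e₂ ∨ lt e₂ e₁)
    (hlt_refine : ∀ e₁ ∈ G.edgeSet, ∀ e₂ ∈ G.edgeSet, fbar f e₁ < fbar f e₂ → lt e₁ e₂)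
    (S : Set V) (β ν : ℝ) (hβν : 2 * ν < β) (hν : 0 ≤ ν)
    (hG : G.Connected) (hS : (G.induce S).Connected)
    (hfS : ∀ v ∈ S, f v ∈ Set.Icc (-β - ν) (-β))
    (hfSc : ∀ v : V, v ∉ S → f v ∈ Set.Icc (-ν) 0) :
    (∀ (e : Sym2 V) (u w : V), IsNegEdge G lt e → e = s(u, w) → (u ∉ S ∨ w ∉ S) →
      pairVert G f hf lt e ∉ S) ∧
    (∀ (e : Sym2 V) (u w : V), IsNegEdge G lt e → e = s(u, w) → u ∈ S → w ∈ S →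
      pairVert G f hf lt e ∈ S) := by
  classical
  have hβν2 : -β < -ν := by linarith
  -- values on S are ≤ -β, values off S are ≥ -ν
  have hSval : ∀ v ∈ S, f v ≤ -β := fun v hv => (hfS v hv).2
  have hScval : ∀ v : V, v ∉ S → -ν ≤ f v := fun v hv => (hfSc v hv).1
  -- all of S is reachable in Gbelow G lt e whenever -ν ≤ fbar f e
  have hSreach : ∀ e ∈ G.edgeSet, -ν ≤ fbar f e →
      ∀ a b : V, a ∈ S → b ∈ S → (Gbelow G lt e).Reachable a b := by
    intro e he hfe a b ha hb
    obtain ⟨p⟩ := hS.preconnected ⟨a, ha⟩ ⟨b, hb⟩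
    have key : ∀ (x y : S), (G.induce S).Walk x y → (Gbelow G lt e).Reachable x y := by
      intro x y p
      induction p with
      | nil => exact Reachable.refl _
      | @cons c d y' hadj q ih =>
        have hGcd : G.Adj (c : V) d := hadj
        have hmem : s((c : V), (d : V)) ∈ G.edgeSet := hGcd
        have hfbar : fbar f s((c : V), (d : V)) < fbar f e := by
          have h1 : f (c : V) ≤ -β := hSval _ c.2
          have h2 : f (d : V) ≤ -β := hSval _ d.2
          have : fbar f s((c : V), (d : V)) = max (f (c : V)) (f (d : V)) := rfl
          rw [this]
          calc max (f (c : V)) (f (d : V)) ≤ -β := max_le h1 h2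
            _ < -ν := hβν2
            _ ≤ fbar f e := hfe
        have hlt : lt s((c : V), (d : V)) e := hlt_refine _ hmem _ he hfbar
        have hAdj : (Gbelow G lt e).Adj (c : V) d := by
          rw [Gbelow, SimpleGraph.fromEdgeSet_adj]
          exact ⟨⟨hmem, hlt⟩, hGcd.ne⟩
        exact hAdj.reachable.trans (ih)
    exact key _ _ p
  constructor
  · -- part 1
    rintro e u w ⟨he, u', w', heq, hnr⟩ heq' hout
    subst heq'
    have hnr' : ¬ (Gbelow G lt s(u, w)).Reachable u w := by
      rcases Sym2.eq_iff.mp heq with ⟨h1, h2⟩ | ⟨h1, h2⟩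
      · subst h1; subst h2; exact hnr
      · subst h1; subst h2; exact fun h => hnr h.symm
    have hfe : -ν ≤ fbar f s(u, w) := by
      have : fbar f s(u, w) = max (f u) (f w) := rfl
      rw [this]
      rcases hout with h | h
      · exact le_trans (hScval u h) (le_max_left _ _)
      · exact le_trans (hScval w h) (le_max_right _ _)
    set H := Gbelow G lt s(u, w) with hH
    obtain ⟨hru, hmu⟩ := compMin_spec f H u
    obtain ⟨hrw, hmw⟩ := compMin_spec f H w
    have hnotboth : ¬ (compMin f H u ∈ S ∧ compMin f H w ∈ S) := by
      rintro ⟨h1, h2⟩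
      exact hnr' (hru.trans ((hSreach _ he hfe _ _ h1 h2).trans hrw.symm))
    have hpv : pairVert G f hf lt s(u, w) =
        if f (compMin f H u) < f (compMin f H w) then compMin f H w else compMin f H u := rfl
    rw [hpv]
    by_cases h1 : compMin f H u ∈ S
    · have h2 : compMin f H w ∉ S := fun h => hnotboth ⟨h1, h⟩
      have : f (compMin f H u) < f (compMin f H w) :=
        lt_of_le_of_lt (hSval _ h1) (lt_of_lt_of_le hβν2 (hScval _ h2))
      rw [if_pos this]; exact h2
    · by_cases h2 : compMin f H w ∈ S
      · have : ¬ f (compMin f H u) < f (compMin f H w) := by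
          have : f (compMin f H w) < f (compMin f H u) :=
            lt_of_le_of_lt (hSval _ h2) (lt_of_lt_of_le hβν2 (hScval _ h1))
          exact lt_asymm this
        rw [if_neg this]; exact h1
      · split_ifs <;> assumption
  · -- part 2
    rintro e u w ⟨he, _⟩ heq hu hw
    subst heq
    set H := Gbelow G lt s(u, w) with hH
    obtain ⟨hru, hmu⟩ := compMin_spec f H u
    obtain ⟨hrw, hmw⟩ := compMin_spec f H w
    have h1 : compMin f H u ∈ S := by
      by_contra h
      have := hScval _ h
      have := hmu u (Reachable.refl u)
      have := hSval u hu
      linarith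
    have h2 : compMin f H w ∈ S := by
      by_contra h
      have := hScval _ h
      have := hmw w (Reachable.refl w)
      have := hSval w hw
      linarith
    have hpv : pairVert G f hf lt s(u, w) =
        if f (compMin f H u) < f (compMin f H w) then compMin f H w else compMin f H u := rfl
    rw [hpv]
    split_ifs <;> assumption
end

section
/- Under the noise model, the negative edges of G having both endpoints in S form a spanning tree of the induced subgraph G[S]: the spanning subgraph of G[S] with these edges contains no cycle and connects every pair of vertices of S. -/
open SimpleGraph

section Aux

open SimpleGraph

variable {V : Type*} [Fintype V]

private noncomputable def msr (G : SimpleGraph V) (lt : Sym2 V → Sym2 V → Prop)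
    (e : Sym2 V) : ℕ :=
  {e' | e' ∈ G.edgeSet ∧ lt e' e}.ncard

private lemma msr_lt {G : SimpleGraph V} {lt : Sym2 V → Sym2 V → Prop}
    (hlt_irrefl : ∀ e ∈ G.edgeSet, ¬ lt e e)
    (hlt_trans : ∀ e₁ ∈ G.edgeSet, ∀ e₂ ∈ G.edgeSet, ∀ e₃ ∈ G.edgeSet,
      lt e₁ e₂ → lt e₂ e₃ → lt e₁ e₃)
    {a b : Sym2 V} (ha : a ∈ G.edgeSet) (hb : b ∈ G.edgeSet) (hab : lt a b) :
    msr G lt a < msr G lt b := by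
  apply Set.ncard_lt_ncard _ (Set.toFinite _)
  constructor
  · rintro x ⟨hx1, hx2⟩
    exact ⟨hx1, hlt_trans x hx1 a ha b hb hx2 hab⟩
  · intro hsub
    exact hlt_irrefl a ha (hsub ⟨ha, hab⟩).2

end Aux

/-- Under the noise model, the negative edges with both endpoints in `S`
form a spanning tree of the induced subgraph `G[S]`: the spanning subgraph with these edges
contains no cycle and connects every pair of vertices of `S`. -/
theorem negative_edges_in_S_spanning_tree {V : Type*} [Fintype V]
    (G : SimpleGraph V) (f : V → ℝ) (hf : Function.Injective f)
    (lt : Sym2 V → Sym2 V → Prop)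
    (hlt_irrefl : ∀ e ∈ G.edgeSet, ¬ lt e e)
    (hlt_trans : ∀ e₁ ∈ G.edgeSet, ∀ e₂ ∈ G.edgeSet, ∀ e₃ ∈ G.edgeSet,
      lt e₁ e₂ → lt e₂ e₃ → lt e₁ e₃)
    (hlt_total : ∀ e₁ ∈ G.edgeSet, ∀ e₂ ∈ G.edgeSet, e₁ ≠ e₂ → lt e₁ e₂ ∨ lt e₂ e₁)
    (hlt_refine : ∀ e₁ ∈ G.edgeSet, ∀ e₂ ∈ G.edgeSet, fbar f e₁ < fbar f e₂ → lt e₁ e₂)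
    (S : Set V) (β ν : ℝ) (hβν : 2 * ν < β) (hν : 0 ≤ ν)
    (hG : G.Connected) (hS : (G.induce S).Connected)
    (hfS : ∀ v ∈ S, f v ∈ Set.Icc (-β - ν) (-β))
    (hfSc : ∀ v : V, v ∉ S → f v ∈ Set.Icc (-ν) 0) :
    (SimpleGraph.fromEdgeSet
      {e | IsNegEdge G lt e ∧ ∀ v ∈ e, v ∈ S}).IsAcyclic ∧
    (∀ u ∈ S, ∀ w ∈ S,
      (SimpleGraph.fromEdgeSet
        {e | IsNegEdge G lt e ∧ ∀ v ∈ e, v ∈ S}).Reachable u w) := by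
  classical
  set T : Set (Sym2 V) := {e | IsNegEdge G lt e ∧ ∀ v ∈ e, v ∈ S} with hT
  set H := SimpleGraph.fromEdgeSet T with hH
  have hνβ : -β < -ν := by linarith
  have fbar_inS : ∀ x : Sym2 V, (∀ v ∈ x, v ∈ S) → fbar f x ≤ -β := by
    intro x
    induction x using Sym2.ind with
    | _ a b =>
      intro hx
      have ha := (hfS a (hx a (Sym2.mem_mk_left a b))).2
      have hb := (hfS b (hx b (Sym2.mem_mk_right a b))).2
      simp only [fbar, Sym2.lift_mk]
      exact max_le ha hb
  have fbar_out : ∀ x : Sym2 V, ¬ (∀ v ∈ x, v ∈ S) → -ν ≤ fbar f x := by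
    intro x
    induction x using Sym2.ind with
    | _ a b =>
      intro hx
      push_neg at hx
      obtain ⟨v, hv, hvS⟩ := hx
      have hv' := (hfSc v hvS).1
      rcases Sym2.mem_iff.mp hv with rfl | rfl
      · simp only [fbar, Sym2.lift_mk]
        exact le_trans hv' (le_max_left _ _)
      · simp only [fbar, Sym2.lift_mk]
        exact le_trans hv' (le_max_right _ _)
  have hinS : ∀ e ∈ G.edgeSet, (∀ v ∈ e, v ∈ S) → ∀ e' ∈ G.edgeSet, lt e' e →
      ∀ v ∈ e', v ∈ S := by
    intro e he hes e' he' hlt'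
    by_contra hcon
    have h1 : fbar f e < fbar f e' :=
      lt_of_le_of_lt (fbar_inS e hes) (lt_of_lt_of_le hνβ (fbar_out e' hcon))
    have h2 := hlt_refine e he e' he' h1
    exact hlt_irrefl e' he' (hlt_trans e' he' e he e' he' hlt' h2)
  have hGb : ∀ (e : Sym2 V) (a b : V), (Gbelow G lt e).Adj a b ↔
      (s(a, b) ∈ G.edgeSet ∧ lt s(a, b) e) ∧ a ≠ b := by
    intro e a b
    rw [Gbelow, SimpleGraph.fromEdgeSet_adj]
    rfl
  have hHadj : ∀ a b : V, H.Adj a b ↔ s(a, b) ∈ T ∧ a ≠ b := by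
    intro a b
    rw [hH, SimpleGraph.fromEdgeSet_adj]
  have hHsub : ∀ d ∈ H.edgeSet, d ∈ T := by
    intro d hd
    rw [hH, SimpleGraph.edgeSet_fromEdgeSet] at hd
    exact hd.1
  have hTG : ∀ d ∈ T, d ∈ G.edgeSet := fun d hd => hd.1.1
  have key : ∀ n : ℕ, ∀ u w : V, s(u, w) ∈ G.edgeSet → msr G lt s(u, w) = n →
      (∀ v ∈ s(u, w), v ∈ S) → H.Reachable u w := by
    intro n
    induction n using Nat.strong_induction_on with
    | _ n ih =>
      intro u w he hm hes
      by_cases hneg : IsNegEdge G lt s(u, w)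
      · have hadj : H.Adj u w := by
          rw [hHadj]
          exact ⟨⟨hneg, hes⟩, (G.mem_edgeSet.mp he).ne⟩
        exact hadj.reachable
      · rw [IsNegEdge] at hneg
        push_neg at hneg
        have hreach : (Gbelow G lt s(u, w)).Reachable u w := hneg he u w rfl
        obtain ⟨p⟩ := hreach
        have step : ∀ (a b : V) (q : (Gbelow G lt s(u, w)).Walk a b), a ∈ S →
            H.Reachable a b := by
          intro a b q
          induction q with
          | nil => intro _; exact SimpleGraph.Reachable.refl _
          | @cons x y _ hxy q ihq =>
            intro hxS
            obtain ⟨⟨hxyG, hxylt⟩, hne⟩ := (hGb _ x y).mp hxy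
            have hxyS : ∀ v ∈ s(x, y), v ∈ S := hinS s(u, w) he hes s(x, y) hxyG hxylt
            have hyS : y ∈ S := hxyS y (Sym2.mem_mk_right x y)
            have h1 : H.Reachable x y :=
              ih (msr G lt s(x, y)) (hm ▸ msr_lt hlt_irrefl hlt_trans hxyG he hxylt)
                x y hxyG rfl hxyS
            exact h1.trans (ihq hyS)
        exact step u w p (hes u (Sym2.mem_mk_left u w))
  constructor
  · intro v c hc
    have hce : ∀ d ∈ c.edges, d ∈ T := fun d hd => hHsub d (c.edges_subset_edgeSet hd)
    have hne : c.edges ≠ [] := by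
      intro hnil
      have h3 := hc.three_le_length
      rw [← c.length_edges, hnil] at h3
      simp at h3
    obtain ⟨e, heF, hmax⟩ := Finset.exists_max_image c.edges.toFinset (msr G lt)
      ⟨c.edges.head hne, List.mem_toFinset.mpr (List.head_mem hne)⟩
    have heC : e ∈ c.edges := List.mem_toFinset.mp heF
    have heT : e ∈ T := hce e heC
    obtain ⟨⟨heG, u', w', heq, hnr⟩, hesS⟩ := heT
    have hemax : ∀ d ∈ c.edges, d = e ∨ lt d e := by
      intro d hd
      by_cases hde : d = e
      · exact Or.inl hde
      · rcases hlt_total d (hTG d (hce d hd)) e heG hde with h | h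
        · exact Or.inr h
        · exfalso
          have := msr_lt hlt_irrefl hlt_trans heG (hTG d (hce d hd)) h
          exact absurd (hmax d (List.mem_toFinset.mpr hd)) (not_le.mpr this)
    set H' := SimpleGraph.fromEdgeSet {d | d ∈ H.edgeSet ∧ (d = e ∨ lt d e)} with hH'
    have hce' : ∀ d ∈ c.edges, d ∈ H'.edgeSet := by
      intro d hd
      rw [hH', SimpleGraph.edgeSet_fromEdgeSet]
      refine ⟨⟨c.edges_subset_edgeSet hd, hemax d hd⟩, ?_⟩
      exact SimpleGraph.not_isDiag_of_mem_edgeSet H (c.edges_subset_edgeSet hd)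
    have hc' : (c.transfer H' hce').IsCycle := hc.transfer hce'
    have hmem : s(u', w') ∈ (c.transfer H' hce').edges := by
      rw [SimpleGraph.Walk.edges_transfer, ← heq]
      exact heC
    have hrd := (SimpleGraph.adj_and_reachable_delete_edges_iff_exists_cycle.mpr
      ⟨v, c.transfer H' hce', hc', hmem⟩).2
    apply hnr
    apply hrd.mono
    intro a b hab
    rw [SimpleGraph.deleteEdges, SimpleGraph.sdiff_adj] at hab
    obtain ⟨hab1, hab2⟩ := hab
    rw [hH', SimpleGraph.fromEdgeSet_adj] at hab1
    obtain ⟨⟨habH, habe⟩, habne⟩ := hab1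
    rcases habe with habe | habe
    · exfalso
      apply hab2
      rw [SimpleGraph.fromEdgeSet_adj]
      exact ⟨by rw [habe, heq]; exact rfl, habne⟩
    · rw [hGb]
      exact ⟨⟨hTG _ (hHsub _ habH), habe⟩, habne⟩
  · intro u hu w hw
    have hreach : (G.induce S).Reachable ⟨u, hu⟩ ⟨w, hw⟩ := hS.preconnected _ _
    obtain ⟨p⟩ := hreach
    have step : ∀ (a b : S) (q : (G.induce S).Walk a b), H.Reachable a.1 b.1 := by
      intro a b q
      induction q with
      | nil => exact SimpleGraph.Reachable.refl _
      | @cons x y _ hxy q ihq =>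
        have hadj : G.Adj x.1 y.1 := hxy
        have hesS : ∀ v ∈ s(x.1, y.1), v ∈ S := by
          intro v hv
          rcases Sym2.mem_iff.mp hv with rfl | rfl
          · exact x.2
          · exact y.2
        have h1 : H.Reachable x.1 y.1 :=
          key (msr G lt s(x.1, y.1)) x.1 y.1 (G.mem_edgeSet.mpr hadj) rfl hesS
        exact h1.trans ihq
    exact step ⟨u, hu⟩ ⟨w, hw⟩ p
end

section
/- Under the noise model, let T be the spanning tree of G formed by all negative edges and let v₀ be the global f-minimum (which lies in S). Then for every vertex u ∈ S, every vertex of the unique path in T from u to v₀ belongs to S; hence the output graph of the reconstruction algorithm, being a union of such paths together with edges inside S, is contained in the ω-neighborhood. -/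
open SimpleGraph

private lemma list_max' {V : Type*} (G : SimpleGraph V) (lt : Sym2 V → Sym2 V → Prop)
    (hlt_trans : ∀ e₁ ∈ G.edgeSet, ∀ e₂ ∈ G.edgeSet, ∀ e₃ ∈ G.edgeSet,
      lt e₁ e₂ → lt e₂ e₃ → lt e₁ e₃)
    (hlt_total : ∀ e₁ ∈ G.edgeSet, ∀ e₂ ∈ G.edgeSet, e₁ ≠ e₂ → lt e₁ e₂ ∨ lt e₂ e₁) :
    ∀ l : List (Sym2 V), (∀ e ∈ l, e ∈ G.edgeSet) → l ≠ [] →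
      ∃ e ∈ l, ∀ e' ∈ l, e' = e ∨ lt e' e := by
  intro l
  induction l with
  | nil => simp
  | cons a l ih =>
    intro hmem _
    by_cases hl : l = []
    · subst hl
      exact ⟨a, List.mem_cons_self (a := a) (l := []), by simp⟩
    · obtain ⟨m, hm, hmax⟩ := ih (fun e he => hmem e (List.mem_cons_of_mem _ he)) hl
      have haE := hmem a (List.mem_cons_self (a := a) (l := l))
      have hmE := hmem m (List.mem_cons_of_mem _ hm)
      by_cases ham : a = m
      · refine ⟨m, List.mem_cons_of_mem _ hm, fun e' he' => ?_⟩
        rcases List.mem_cons.mp he' with rfl | h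
        · exact Or.inl ham
        · exact hmax e' h
      rcases hlt_total a haE m hmE ham with h | h
      · refine ⟨m, List.mem_cons_of_mem _ hm, fun e' he' => ?_⟩
        rcases List.mem_cons.mp he' with rfl | h'
        · exact Or.inr h
        · exact hmax e' h'
      · refine ⟨a, List.mem_cons_self (a := a) (l := l), fun e' he' => ?_⟩
        rcases List.mem_cons.mp he' with rfl | h'
        · exact Or.inl rfl
        · rcases hmax e' h' with rfl | h''
          · exact Or.inr h
          · exact Or.inr (hlt_trans e' (hmem e' he') m hmE a haE h'' h)

private lemma walk_leaves' {V : Type*} {H : SimpleGraph V} (S : Set V) :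
    ∀ {u v : V} (p : H.Walk u v), u ∈ S →
      ∀ x ∈ p.support, x ∉ S → ∃ a b, s(a, b) ∈ p.edges ∧ b ∉ S
  | u, _, SimpleGraph.Walk.nil, huS, x, hx, hxS => by
      simp at hx; subst hx; exact absurd huS hxS
  | u, v, SimpleGraph.Walk.cons (v := c) h q, huS, x, hx, hxS => by
      rw [SimpleGraph.Walk.support_cons] at hx
      rcases List.mem_cons.mp hx with rfl | hx'
      · exact absurd huS hxS
      · by_cases hc : c ∈ S
        · obtain ⟨a, b, hab, hb⟩ := walk_leaves' S q hc x hx' hxS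
          exact ⟨a, b, by rw [SimpleGraph.Walk.edges_cons]; exact List.mem_cons_of_mem _ hab, hb⟩
        · exact ⟨u, c, by rw [SimpleGraph.Walk.edges_cons]; exact List.mem_cons_self, hc⟩

private lemma walk_split' {V : Type*} {H : SimpleGraph V} :
    ∀ {u v : V} (p : H.Walk u v) (e : Sym2 V), e ∈ p.edges → p.edges.Nodup →
      ∃ x y, s(x, y) = e ∧ ∃ (q₁ : H.Walk u x) (q₂ : H.Walk y v),
        (∀ e' ∈ q₁.edges, e' ∈ p.edges ∧ e' ≠ e) ∧
        (∀ e' ∈ q₂.edges, e' ∈ p.edges ∧ e' ≠ e)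
  | u, _, SimpleGraph.Walk.nil, e, he, _ => by simp at he
  | u, v, SimpleGraph.Walk.cons (v := c) h q, e, he, hnd => by
      rw [SimpleGraph.Walk.edges_cons] at he hnd
      rcases List.mem_cons.mp he with heq | he'
      · refine ⟨u, c, heq.symm, SimpleGraph.Walk.nil, q, by simp, ?_⟩
        intro e' he''
        refine ⟨by rw [SimpleGraph.Walk.edges_cons]; exact List.mem_cons_of_mem _ he'', ?_⟩
        intro hcon
        rw [hcon, heq] at he''
        exact (List.nodup_cons.mp hnd).1 he''
      · obtain ⟨x, y, hxy, q₁, q₂, hq₁, hq₂⟩ := walk_split' q e he' (List.nodup_cons.mp hnd).2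
        refine ⟨x, y, hxy, SimpleGraph.Walk.cons h q₁, q₂, ?_, ?_⟩
        · intro e' he''
          rw [SimpleGraph.Walk.edges_cons] at he''
          rcases List.mem_cons.mp he'' with rfl | h''
          · refine ⟨by rw [SimpleGraph.Walk.edges_cons]; exact List.mem_cons_self, ?_⟩
            intro hcon
            rw [← hcon] at he'
            exact (List.nodup_cons.mp hnd).1 he'
          · obtain ⟨h1, h2⟩ := hq₁ e' h''
            exact ⟨by rw [SimpleGraph.Walk.edges_cons]; exact List.mem_cons_of_mem _ h1, h2⟩
        · intro e' he''
          obtain ⟨h1, h2⟩ := hq₂ e' he''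
          exact ⟨by rw [SimpleGraph.Walk.edges_cons]; exact List.mem_cons_of_mem _ h1, h2⟩

theorem tree_paths_stay_in_S {V : Type*} [Fintype V]
    (G : SimpleGraph V) (f : V → ℝ) (hf : Function.Injective f)
    (lt : Sym2 V → Sym2 V → Prop)
    (hlt_irrefl : ∀ e ∈ G.edgeSet, ¬ lt e e)
    (hlt_trans : ∀ e₁ ∈ G.edgeSet, ∀ e₂ ∈ G.edgeSet, ∀ e₃ ∈ G.edgeSet,
      lt e₁ e₂ → lt e₂ e₃ → lt e₁ e₃)
    (hlt_total : ∀ e₁ ∈ G.edgeSet, ∀ e₂ ∈ G.edgeSet, e₁ ≠ e₂ → lt e₁ e₂ ∨ lt e₂ e₁)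
    (hlt_refine : ∀ e₁ ∈ G.edgeSet, ∀ e₂ ∈ G.edgeSet, fbar f e₁ < fbar f e₂ → lt e₁ e₂)
    (S : Set V) (β ν : ℝ) (hβν : 2 * ν < β) (hν : 0 ≤ ν)
    (hG : G.Connected) (hS : (G.induce S).Connected)
    (hfS : ∀ v ∈ S, f v ∈ Set.Icc (-β - ν) (-β))
    (hfSc : ∀ v : V, v ∉ S → f v ∈ Set.Icc (-ν) 0)
    (v₀ : V) (hv₀ : ∀ w : V, f v₀ ≤ f w) :
    v₀ ∈ S ∧
    ∀ u ∈ S,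
      ∀ p : (SimpleGraph.fromEdgeSet {e | IsNegEdge G lt e}).Walk u v₀,
        p.IsPath → ∀ x ∈ p.support, x ∈ S := by
  classical
  obtain ⟨⟨s₀, hs₀⟩⟩ := hS.nonempty
  have hv₀S : v₀ ∈ S := by
    by_contra h
    have h1 := (hfS s₀ hs₀).2
    have h2 := (hfSc v₀ h).1
    have h3 := hv₀ s₀
    linarith
  refine ⟨hv₀S, ?_⟩
  intro u hu p hp x hx
  by_contra hxS
  have hneg : ∀ e ∈ p.edges, IsNegEdge G lt e := by
    intro e he
    have h1 := p.edges_subset_edgeSet he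
    rw [SimpleGraph.edgeSet_fromEdgeSet] at h1
    exact h1.1
  have hInG : ∀ e ∈ p.edges, e ∈ G.edgeSet := fun e he => (hneg e he).1
  -- an edge of p leaves S
  obtain ⟨a₀, b₀, he₀, hb₀⟩ := walk_leaves' S p hu x hx hxS
  -- the lt-maximal edge of p
  obtain ⟨estar, hestar, hmax⟩ := list_max' G lt hlt_trans hlt_total p.edges hInG
      (List.ne_nil_of_mem he₀)
  have hestarG : estar ∈ G.edgeSet := hInG _ hestar
  -- fbar bound for estar
  have hfb₀ : -ν ≤ fbar f s(a₀, b₀) := by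
    have : fbar f s(a₀, b₀) = max (f a₀) (f b₀) := rfl
    rw [this]
    exact le_trans (hfSc b₀ hb₀).1 (le_max_right _ _)
  have hfbstar : -ν ≤ fbar f estar := by
    rcases hmax _ he₀ with heq | hlt'
    · rw [← heq]; exact hfb₀
    · by_contra hc
      push_neg at hc
      have h1 : lt estar s(a₀, b₀) :=
        hlt_refine estar hestarG s(a₀, b₀) (hInG _ he₀) (lt_of_lt_of_le hc hfb₀)
      exact hlt_irrefl estar hestarG
        (hlt_trans estar hestarG s(a₀, b₀) (hInG _ he₀) estar hestarG h1 hlt')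
  -- all S-internal edges of G lie in Gbelow G lt estar
  have hint : ∀ a b : V, a ∈ S → b ∈ S → G.Adj a b → (Gbelow G lt estar).Adj a b := by
    intro a b ha hb hab
    rw [Gbelow, SimpleGraph.fromEdgeSet_adj]
    refine ⟨⟨(G.mem_edgeSet).mpr hab, ?_⟩, hab.ne⟩
    apply hlt_refine _ ((G.mem_edgeSet).mpr hab) _ hestarG
    have h1 : fbar f s(a, b) = max (f a) (f b) := rfl
    rw [h1]
    have h2 : max (f a) (f b) ≤ -β := max_le (hfS a ha).2 (hfS b hb).2
    linarith
  -- u and v₀ are connected in Gbelow G lt estar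
  have hreachS : (Gbelow G lt estar).Reachable u v₀ := by
    have hr : (G.induce S).Reachable ⟨u, hu⟩ ⟨v₀, hv₀S⟩ := hS.preconnected _ _
    exact Reachable.map ⟨Subtype.val, fun {a b} hab => hint a.1 b.1 a.2 b.2 hab⟩ hr
  -- split p at estar
  obtain ⟨x', y', hxy, q₁, q₂, hq₁, hq₂⟩ :=
    walk_split' p estar hestar hp.isTrail.edges_nodup
  have hsub : ∀ (w₁ w₂ : V) (q : (SimpleGraph.fromEdgeSet {e | IsNegEdge G lt e}).Walk w₁ w₂),
      (∀ e' ∈ q.edges, e' ∈ p.edges ∧ e' ≠ estar) →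
      ∀ e' ∈ q.edges, e' ∈ (Gbelow G lt estar).edgeSet := by
    intro w₁ w₂ q hq e' he'
    obtain ⟨hep, hene⟩ := hq e' he'
    rw [Gbelow, SimpleGraph.edgeSet_fromEdgeSet]
    refine ⟨⟨hInG e' hep, ?_⟩, SimpleGraph.not_isDiag_of_mem_edgeSet G (hInG e' hep)⟩
    rcases hmax e' hep with h | h
    · exact absurd h hene
    · exact h
  have r₁ := (q₁.transfer _ (hsub _ _ q₁ hq₁)).reachable
  have r₂ := (q₂.transfer _ (hsub _ _ q₂ hq₂)).reachable
  have hrxy : (Gbelow G lt estar).Reachable x' y' :=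
    (r₁.symm.trans hreachS).trans r₂.symm
  obtain ⟨_, u', w', heq, hnr⟩ := hneg estar hestar
  have hxy' : s(x', y') = s(u', w') := hxy.trans heq
  rcases Sym2.eq_iff.mp hxy' with ⟨rfl, rfl⟩ | ⟨rfl, rfl⟩
  · exact hnr hrxy
  · exact hnr hrxy.symm
end

section
/- Under the noise model, the number of positive edges of G with both endpoints in S equals |E(G[S])| − |S| + 1, the first Betti number of the induced subgraph G[S] (here |E(G[S])| is the number of edges of G with both endpoints in S). -/
open SimpleGraph

private lemma reach_of_adj_reach {V : Type*} {H N : SimpleGraph V}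
    (h : ∀ x y, H.Adj x y → N.Reachable x y) : ∀ {u w : V}, H.Reachable u w → N.Reachable u w := by
  intro u w hr
  obtain ⟨p⟩ := hr
  induction p with
  | nil => exact Reachable.refl _
  | cons h' q ih => exact (h _ _ h').trans ih

private lemma walk_support_subset {V : Type*} {H : SimpleGraph V} {S : Set V}
    (hH : ∀ x y, H.Adj x y → y ∈ S) :
    ∀ {u w : V}, (p : H.Walk u w) → u ∈ S → ∀ v ∈ p.support, v ∈ S := by
  intro u w p
  induction p with
  | nil => intro hu v hv; simp at hv; subst hv; exact hu
  | cons h' q ih =>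
    intro hu v hv
    rw [SimpleGraph.Walk.support_cons] at hv
    rcases List.mem_cons.mp hv with rfl | hv
    · exact hu
    · exact ih (hH _ _ h') v hv

private lemma walk_induce_reach {V : Type*} {N : SimpleGraph V} {S : Set V} :
    ∀ {u w : V} (p : N.Walk u w), (∀ v ∈ p.support, v ∈ S) → ∀ (hu : u ∈ S) (hw : w ∈ S),
      (N.induce S).Reachable ⟨u, hu⟩ ⟨w, hw⟩ := by
  intro u w p
  induction p with
  | nil => intro _ hu hw; exact Reachable.refl _
  | @cons u x w h' q ih =>
    intro hsup hu hw
    have hx : x ∈ S := hsup x (by simp [SimpleGraph.Walk.support_cons])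
    have hadj : (N.induce S).Adj ⟨u, hu⟩ ⟨x, hx⟩ := h'
    exact hadj.reachable.trans (ih (fun v hv => hsup v (by simp [SimpleGraph.Walk.support_cons, hv])) hx hw)

/-- Under the noise model, the number of positive edges with both endpoints
in `S` equals `|E(G[S])| − |S| + 1`, the first Betti number of `G[S]` (stated additively to
avoid natural subtraction). -/
theorem positive_edges_count_betti {V : Type*} [Fintype V]
    (G : SimpleGraph V) (f : V → ℝ) (hf : Function.Injective f)
    (lt : Sym2 V → Sym2 V → Prop)
    (hlt_irrefl : ∀ e ∈ G.edgeSet, ¬ lt e e)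
    (hlt_trans : ∀ e₁ ∈ G.edgeSet, ∀ e₂ ∈ G.edgeSet, ∀ e₃ ∈ G.edgeSet,
      lt e₁ e₂ → lt e₂ e₃ → lt e₁ e₃)
    (hlt_total : ∀ e₁ ∈ G.edgeSet, ∀ e₂ ∈ G.edgeSet, e₁ ≠ e₂ → lt e₁ e₂ ∨ lt e₂ e₁)
    (hlt_refine : ∀ e₁ ∈ G.edgeSet, ∀ e₂ ∈ G.edgeSet, fbar f e₁ < fbar f e₂ → lt e₁ e₂)
    (S : Set V) (β ν : ℝ) (hβν : 2 * ν < β) (hν : 0 ≤ ν)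
    (hG : G.Connected) (hS : (G.induce S).Connected)
    (hfS : ∀ v ∈ S, f v ∈ Set.Icc (-β - ν) (-β))
    (hfSc : ∀ v : V, v ∉ S → f v ∈ Set.Icc (-ν) 0) :
    {e : Sym2 V | IsPosEdge G lt e ∧ ∀ v ∈ e, v ∈ S}.ncard + S.ncard =
      {e : Sym2 V | e ∈ G.edgeSet ∧ ∀ v ∈ e, v ∈ S}.ncard + 1 := by
  classical
  set Internal : Sym2 V → Prop := fun e => ∀ v ∈ e, v ∈ S with hInternal
  -- step 1: value separation
  have hfbar : ∀ u w : V, fbar f s(u, w) = max (f u) (f w) := fun u w => rfl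
  have L1 : ∀ e, Internal e → fbar f e ≤ -β := by
    intro e hint
    induction e with
    | _ u w =>
      have hu : u ∈ S := hint u (by simp)
      have hw : w ∈ S := hint w (by simp)
      rw [hfbar]
      exact max_le (hfS u hu).2 (hfS w hw).2
  have L2 : ∀ e : Sym2 V, ¬ Internal e → -ν ≤ fbar f e := by
    intro e hint
    induction e with
    | _ u w =>
      have hint2 : ∃ v ∈ s(u, w), v ∉ S := by
        by_contra hc
        push_neg at hc
        exact hint hc
      obtain ⟨v, hv, hvS⟩ := hint2
      rw [Sym2.mem_iff] at hv
      rw [hfbar]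
      rcases hv with rfl | rfl
      · exact le_max_of_le_left (hfSc v hvS).1
      · exact le_max_of_le_right (hfSc v hvS).1
  have L3 : (-β : ℝ) < -ν := by linarith
  have L4 : ∀ e ∈ G.edgeSet, Internal e → ∀ e' ∈ G.edgeSet, lt e' e → Internal e' := by
    intro e he hint e' he' hlt
    by_contra hc
    have h1 : fbar f e < fbar f e' := lt_of_le_of_lt (L1 e hint) (lt_of_lt_of_le L3 (L2 e' hc))
    exact hlt_irrefl e' he' (hlt_trans e' he' e he e' he' hlt (hlt_refine e he e' he' h1))
  -- rank
  set rank : Sym2 V → ℕ := fun e => {e' | e' ∈ G.edgeSet ∧ lt e' e}.ncard with hrankdef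
  have hrank_lt : ∀ e₁ ∈ G.edgeSet, ∀ e₂ ∈ G.edgeSet, lt e₁ e₂ → rank e₁ < rank e₂ := by
    intro e₁ h₁ e₂ h₂ h12
    apply Set.ncard_lt_ncard _ (Set.toFinite _)
    constructor
    · rintro x ⟨hx, hxl⟩
      exact ⟨hx, hlt_trans x hx e₁ h₁ e₂ h₂ hxl h12⟩
    · rintro hsub
      have : e₁ ∈ {e' | e' ∈ G.edgeSet ∧ lt e' e₁} := hsub ⟨h₁, h12⟩
      exact hlt_irrefl e₁ h₁ this.2
  -- negative subgraph restricted to S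
  set N : SimpleGraph V := SimpleGraph.fromEdgeSet {e | IsNegEdge G lt e ∧ Internal e} with hN
  have hNadj : ∀ x y : V, N.Adj x y ↔ (IsNegEdge G lt s(x, y) ∧ Internal s(x, y)) ∧ x ≠ y := by
    intro x y; rw [hN, fromEdgeSet_adj]; rfl
  -- key connectivity lemma
  have key : ∀ n : ℕ, ∀ e ∈ G.edgeSet, rank e = n → Internal e →
      ∀ u w : V, e = s(u, w) → N.Reachable u w := by
    intro n
    induction n using Nat.strong_induction_on with
    | _ n ih =>
      intro e he hrk hint u w hew
      have hadjG : G.Adj u w := by rw [hew, mem_edgeSet] at he; exact he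
      by_cases hneg : IsNegEdge G lt e
      · exact (((hNadj u w).mpr ⟨⟨hew ▸ hneg, hew ▸ hint⟩, hadjG.ne⟩)).reachable
      · have hreach : (Gbelow G lt e).Reachable u w := by
          by_contra hc
          exact hneg ⟨he, u, w, hew, hc⟩
        refine reach_of_adj_reach ?_ hreach
        intro x y hxy
        rw [Gbelow, fromEdgeSet_adj] at hxy
        obtain ⟨⟨hxyG, hxylt⟩, hne⟩ := hxy
        exact ih (rank s(x, y)) (hrk ▸ hrank_lt _ hxyG _ he hxylt) s(x, y) hxyG rfl
          (L4 e he hint _ hxyG hxylt) x y rfl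
  -- edges of N stay in S
  have hNS : ∀ x y : V, N.Adj x y → y ∈ S := by
    intro x y hxy
    rw [hNadj] at hxy
    exact hxy.1.2 y (by simp)
  -- reachability in N between vertices of S
  have hSreach : ∀ a b : ↥S, N.Reachable a.1 b.1 := by
    have main : ∀ {a b : ↥S} (p : (G.induce S).Walk a b), N.Reachable a.1 b.1 := by
      intro a b p
      induction p with
      | nil => exact Reachable.refl _
      | @cons a c b h q ih =>
        have hadj : G.Adj a.1 c.1 := h
        have hint : Internal s(a.1, c.1) := by
          intro v hv
          rw [Sym2.mem_iff] at hv
          rcases hv with rfl | rfl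
          exacts [a.2, c.2]
        exact (key (rank s(a.1, c.1)) s(a.1, c.1) hadj rfl hint _ _ rfl).trans ih
    intro a b
    obtain ⟨p⟩ := hS.preconnected a b
    exact main p
  haveI : Fintype ↥S := S.toFinite.fintype
  -- the tree
  have hTconn : (N.induce S).Connected := by
    rw [connected_iff]
    refine ⟨?_, hS.nonempty⟩
    intro a b
    obtain ⟨p⟩ := hSreach a b
    have hsup := walk_support_subset hNS p a.2
    exact walk_induce_reach p hsup a.2 b.2
  have hNacyc : N.IsAcyclic := by
    intro v c hc
    -- pick the lt-maximal edge of the cycle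
    have hne : c.edges ≠ [] := by
      intro h
      have h3 := hc.three_le_length
      have : c.edges.length = c.length := SimpleGraph.Walk.length_edges c
      rw [h] at this
      simp at this
      omega
    obtain ⟨e0, he0⟩ := List.exists_mem_of_ne_nil c.edges hne
    obtain ⟨e, heE, hemax⟩ := Finset.exists_max_image c.edges.toFinset rank
      ⟨e0, List.mem_toFinset.mpr he0⟩
    have heC : e ∈ c.edges := List.mem_toFinset.mp heE
    have heN : e ∈ N.edgeSet := c.edges_subset_edgeSet heC
    have heNset : IsNegEdge G lt e ∧ Internal e := by
      rw [hN, edgeSet_fromEdgeSet] at heN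
      exact heN.1
    have heG : e ∈ G.edgeSet := heNset.1.1
    obtain ⟨-, u, w, hew, hnr⟩ := heNset.1
    -- the graph of the cycle's edges
    set T' : SimpleGraph V := SimpleGraph.fromEdgeSet {e' | e' ∈ c.edges} with hT'
    have hsub : ∀ e' ∈ c.edges, e' ∈ T'.edgeSet := by
      intro e' he'
      rw [hT', edgeSet_fromEdgeSet]
      exact ⟨he', N.not_isDiag_of_mem_edgeSet (c.edges_subset_edgeSet he')⟩
    have hc' : (c.transfer T' hsub).IsCycle := hc.transfer _
    have hrw : (T' \ fromEdgeSet {e}).Reachable u w := by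
      rw [hew]
      exact ((adj_and_reachable_delete_edges_iff_exists_cycle (G := T')).mpr
        ⟨v, c.transfer T' hsub, hc', by
          rw [SimpleGraph.Walk.edges_transfer]
          exact hew ▸ heC⟩).2
    apply hnr
    refine Reachable.mono ?_ hrw
    intro x y hxy
    rw [sdiff_adj, hT', fromEdgeSet_adj, fromEdgeSet_adj] at hxy
    obtain ⟨⟨hxyC, hxyne⟩, hnot⟩ := hxy
    have hxyN : s(x, y) ∈ N.edgeSet := c.edges_subset_edgeSet hxyC
    have hxyG : s(x, y) ∈ G.edgeSet := by
      rw [hN, edgeSet_fromEdgeSet] at hxyN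
      exact hxyN.1.1.1
    have hne_e : s(x, y) ≠ e := by
      intro h
      exact hnot ⟨by rw [h]; exact rfl, hxyne⟩
    have hltxy : lt s(x, y) e := by
      rcases hlt_total _ hxyG _ heG hne_e with h | h
      · exact h
      · exact absurd (hemax _ (List.mem_toFinset.mpr hxyC))
          (not_le.mpr (hrank_lt _ heG _ hxyG h))
    rw [Gbelow, fromEdgeSet_adj]
    exact ⟨⟨hxyG, hltxy⟩, hxyne⟩
  have hTacyc : (N.induce S).IsAcyclic := by
    intro a c hc
    exact hNacyc (c.map (SimpleGraph.Embedding.induce S).toHom)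
      (hc.map Subtype.val_injective)
  have hTree : (N.induce S).IsTree := ⟨hTconn, hTacyc⟩
  haveI : Fintype (N.induce S).edgeSet := Set.Finite.fintype (Set.toFinite _)
  have hcard := hTree.card_edgeFinset
  -- transfer the edge count from the subtype to V
  have himg : Sym2.map (Subtype.val : ↥S → V) '' (N.induce S).edgeSet = N.edgeSet := by
    ext e
    constructor
    · rintro ⟨e', he', rfl⟩
      induction e' with
      | _ a b =>
        have hab : N.Adj a.1 b.1 := he'
        simpa using hab
    · intro he
      induction e with
      | _ x y =>
        have hxy : N.Adj x y := he
        have hx : x ∈ S := by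
          rw [hNadj] at hxy
          exact hxy.1.2 x (by simp)
        have hy : y ∈ S := hNS x y hxy
        refine ⟨s(⟨x, hx⟩, ⟨y, hy⟩), ?_, by simp⟩
        exact hxy
  have hNcard : N.edgeSet.ncard = (N.induce S).edgeSet.ncard := by
    rw [← himg, Set.ncard_image_of_injective _ (Sym2.map.injective Subtype.val_injective)]
  have hScard : S.ncard = Fintype.card ↥S := by
    rw [← Nat.card_coe_set_eq, Nat.card_eq_fintype_card]
  have hTedge : (N.induce S).edgeSet.ncard = (N.induce S).edgeFinset.card := by
    rw [Set.ncard_eq_toFinset_card']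
    exact congrArg Finset.card (by ext e; simp)
  have hNes : N.edgeSet = {e : Sym2 V | IsNegEdge G lt e ∧ Internal e} := by
    rw [hN, edgeSet_fromEdgeSet]
    ext e
    simp only [Set.mem_diff, Set.mem_setOf_eq]
    exact ⟨fun h => h.1, fun h => ⟨h, G.not_isDiag_of_mem_edgeSet h.1.1⟩⟩
  have hneg1 : {e : Sym2 V | IsNegEdge G lt e ∧ Internal e}.ncard + 1 = S.ncard := by
    rw [← hNes, hNcard, hTedge, hScard]
    exact hcard
  have hdisj : Disjoint {e : Sym2 V | IsPosEdge G lt e ∧ Internal e}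
      {e : Sym2 V | IsNegEdge G lt e ∧ Internal e} := by
    rw [Set.disjoint_left]
    rintro e ⟨hp, -⟩ ⟨hn, -⟩
    exact hp.2 hn
  have hunion : {e : Sym2 V | IsPosEdge G lt e ∧ Internal e}
      ∪ {e : Sym2 V | IsNegEdge G lt e ∧ Internal e}
      = {e : Sym2 V | e ∈ G.edgeSet ∧ Internal e} := by
    ext e
    simp only [Set.mem_union, Set.mem_setOf_eq]
    constructor
    · rintro (⟨h, hi⟩ | ⟨h, hi⟩)
      exacts [⟨h.1, hi⟩, ⟨h.1, hi⟩]
    · rintro ⟨hg, hi⟩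
      by_cases hn : IsNegEdge G lt e
      · exact Or.inr ⟨hn, hi⟩
      · exact Or.inl ⟨⟨hg, hn⟩, hi⟩
  have hsum := Set.ncard_union_eq hdisj (Set.toFinite _) (Set.toFinite _)
  rw [hunion] at hsum
  show {e : Sym2 V | IsPosEdge G lt e ∧ Internal e}.ncard + S.ncard
      = {e : Sym2 V | e ∈ G.edgeSet ∧ Internal e}.ncard + 1
  omega
end
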